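/- Let v_k, α, n_k be as follows: v_1 = 1, v_{k+1} = k·2^{v_k} + v_k + 1, α = Σ 2^{-v_k}, n_k = 2^{v_k}, n_{-k} = -n_k. Then the function h_+(ζ) := Σ_{k>0} (1/k)(e^{2πi n_k α} − 1) ζ^{n_k} defines an entire holomorphic function on ℂ, i.e., the power series has infinite radius of convergence. -/

import Mathlib

open Complex

theorem stmt3 (v : ℕ → ℕ) (hv1 : v 1 = 1)
    (hv : ∀ k ≥ 1, v (k + 1) = k * 2 ^ (v k) + v k + 1)
    (α : ℝ) (hα : α = ∑' k : ℕ, (2:ℝ) ^ (-(v (k + 1) : ℤ)))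
    (n : ℕ → ℕ) (hn : ∀ k, n k = 2 ^ (v k)) :
    ∀ ζ : ℂ, Summable (fun k : ℕ =>
      (1 / ((k : ℂ) + 1)) *
        (Complex.exp (2 * Real.pi * Complex.I * (n (k + 1) : ℂ) * (α : ℂ)) - 1) *
        ζ ^ (n (k + 1))) := by
  have mono : ∀ i d : ℕ, v (i + 1) + d ≤ v (i + 1 + d) := by
    intro i d
    induction d with
    | zero => simp
    | succ d ih =>
      have h := hv (i + 1 + d) (by omega)
      have : v (i + 1 + d) + 1 ≤ v (i + 1 + d + 1) := by
        rw [h]; have := Nat.one_le_two_pow (n := v (i + 1 + d)); nlinarith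
      have h2 : v (i + 1 + (d + 1)) = v (i + 1 + d + 1) := by ring_nf
      omega
  have lb : ∀ j : ℕ, j + 1 ≤ v (j + 1) := by
    intro j
    have := mono 0 j
    simpa [hv1, Nat.add_comm] using this
  have hS : Summable (fun j : ℕ => (2:ℝ) ^ (-(v (j + 1) : ℤ))) := by
    refine Summable.of_nonneg_of_le (f := fun j : ℕ => (1/2 : ℝ) ^ j)
      (fun j => by positivity) ?_ ?_
    · intro j
      have h1 : (2:ℝ) ^ (-(v (j + 1) : ℤ)) = (1/2 : ℝ) ^ (v (j + 1)) := by
        rw [zpow_neg, zpow_natCast, one_div, inv_pow]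
      rw [h1]
      exact pow_le_pow_of_le_one (by norm_num) (by norm_num) (by have := lb j; omega)
    · exact summable_geometric_of_lt_one (by norm_num) (by norm_num)
  intro ζ
  set C : ℝ := ‖ζ‖ with hC
  have hC0 : 0 ≤ C := norm_nonneg ζ
  obtain ⟨K₀, hK₀⟩ := pow_unbounded_of_one_lt C (by norm_num : (1:ℝ) < 2)
  refine Summable.of_norm_bounded_eventually_nat
    (g := fun k => (4 * Real.pi) * (1/2 : ℝ) ^ (k + 1)) ?_ ?_
  · have h := (summable_geometric_of_lt_one (r := (1/2:ℝ)) (by norm_num) (by norm_num)).mul_left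
      (4 * Real.pi * (1/2))
    refine h.congr fun k => ?_
    rw [pow_succ]; ring
  · filter_upwards [Filter.eventually_ge_atTop (max K₀ 1)] with k hk
    have hk1 : 1 ≤ k := le_trans (le_max_right _ _) hk
    have hkK₀ : K₀ ≤ k := le_trans (le_max_left _ _) hk
    set K : ℕ := k + 1 with hK
    set M : ℕ := v K with hM
    set N : ℕ := 2 ^ M with hN
    -- basic numeric facts
    have hMk : K ≤ M := lb k
    have hNK : K + 1 ≤ N := by
      calc K + 1 ≤ 2 ^ K := by
            have := Nat.lt_two_pow_self (n := K); omega
        _ ≤ 2 ^ M := Nat.pow_le_pow_right (by norm_num) hMk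
    have hKN3 : 3 ≤ K * N := by nlinarith
    -- the shifted series
    set f : ℕ → ℝ := fun j => (2:ℝ) ^ ((M:ℤ) - v (j + 1)) with hf
    have hfS : Summable f := by
      have h := hS.mul_left ((2:ℝ) ^ (M:ℤ))
      refine h.congr fun j => ?_
      simp only [hf]
      rw [sub_eq_add_neg, ← zpow_add₀ (by norm_num : (2:ℝ) ≠ 0)]
    have hNα : (N:ℝ) * α = ∑' j, f j := by
      rw [hα, ← tsum_mul_left]
      congr 1; funext j
      have hNcast : ((N:ℕ):ℝ) = (2:ℝ) ^ (M:ℤ) := by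
        rw [hN]; push_cast; rw [← zpow_natCast]
      simp only [hf]
      rw [hNcast, sub_eq_add_neg, ← zpow_add₀ (by norm_num : (2:ℝ) ≠ 0)]
    have hsplit := Summable.sum_add_tsum_nat_add (f := f) K hfS
    set m : ℕ := ∑ j ∈ Finset.range K, 2 ^ (M - v (j + 1)) with hm'
    have hm : (m:ℝ) = ∑ j ∈ Finset.range K, f j := by
      rw [hm']
      push_cast
      refine Finset.sum_congr rfl fun j hj => ?_
      have hjk : j < K := Finset.mem_range.1 hj
      have hle : v (j + 1) ≤ M := by
        have h1 := mono j (k - j)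
        have h2 : j + 1 + (k - j) = K := by omega
        rw [h2] at h1; omega
      have hcast : ((M - v (j + 1) : ℕ) : ℤ) = (M:ℤ) - v (j + 1) := by omega
      simp only [hf]
      rw [← hcast, zpow_natCast]
    set t : ℝ := ∑' j, f (j + K) with ht'
    have htS : Summable fun j => f (j + K) := (summable_nat_add_iff K).2 hfS
    have ht0 : 0 ≤ t := tsum_nonneg fun j => by positivity
    have hgeomS : Summable fun j : ℕ => (2:ℝ) ^ ((M:ℤ) - v (K + 1) - j) := by
      have h := (summable_geometric_of_lt_one (r := (1/2:ℝ)) (by norm_num)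
        (by norm_num)).mul_left ((2:ℝ) ^ ((M:ℤ) - v (K + 1)))
      refine h.congr fun j => ?_
      rw [one_div, inv_pow, ← zpow_natCast (2:ℝ) j, ← zpow_neg,
        ← zpow_add₀ (by norm_num : (2:ℝ) ≠ 0)]
      congr 1
    have htle : t ≤ (2:ℝ) ^ (-((K * N : ℕ) : ℤ)) := by
      have hterm : ∀ j, f (j + K) ≤ (2:ℝ) ^ ((M:ℤ) - v (K + 1) - j) := by
        intro j
        have h1 := mono K j
        have h2 : K + 1 + j = j + K + 1 := by omega
        rw [h2] at h1
        apply zpow_le_zpow_right₀ (by norm_num : (1:ℝ) ≤ 2)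
        omega
      calc t ≤ ∑' j : ℕ, (2:ℝ) ^ ((M:ℤ) - v (K + 1) - j) := Summable.tsum_le_tsum hterm htS hgeomS
        _ = (2:ℝ) ^ ((M:ℤ) - v (K + 1)) * ∑' j : ℕ, (1/2:ℝ) ^ j := by
            rw [← tsum_mul_left]
            congr 1; funext j
            rw [one_div, inv_pow, ← zpow_natCast (2:ℝ) j, ← zpow_neg,
              ← zpow_add₀ (by norm_num : (2:ℝ) ≠ 0)]
            congr 1
        _ = (2:ℝ) ^ ((M:ℤ) - v (K + 1)) * 2 := by rw [tsum_geometric_two]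
        _ = (2:ℝ) ^ ((M:ℤ) - v (K + 1) + 1) := by
            rw [zpow_add₀ (by norm_num : (2:ℝ) ≠ 0)]; norm_num
        _ = (2:ℝ) ^ (-((K * N : ℕ) : ℤ)) := by
            congr 1
            have hvK := hv K (by omega)
            rw [← hM, ← hN] at hvK
            omega
    have hNαmt : (N:ℝ) * α = (m:ℝ) + t := by
      rw [hNα, ← hsplit, hm, ht']
    -- rewrite the exponential
    have hexp : Complex.exp (2 * Real.pi * Complex.I * (N : ℂ) * (α : ℂ))
        = Complex.exp ((2 * Real.pi * t : ℝ) * Complex.I) := by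
      have h1 : (N:ℂ) * (α:ℂ) = (m:ℂ) + (t:ℂ) := by
        have : ((N:ℝ) * α : ℝ) = ((m:ℝ) + t : ℝ) := hNαmt
        calc (N:ℂ) * (α:ℂ) = (((N:ℝ) * α : ℝ) : ℂ) := by push_cast; ring
          _ = (((m:ℝ) + t : ℝ) : ℂ) := by rw [this]
          _ = (m:ℂ) + (t:ℂ) := by push_cast; ring
      have h2 : 2 * (Real.pi:ℂ) * Complex.I * (N : ℂ) * (α : ℂ)
          = ((N:ℂ) * (α:ℂ)) * (2 * (Real.pi:ℂ) * Complex.I) := by ring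
      rw [h2, h1, add_mul, Complex.exp_add]
      have h3 : ((m:ℂ)) * (2 * (Real.pi:ℂ) * Complex.I) = ((m:ℤ):ℂ) * (2 * (Real.pi:ℂ) * Complex.I) := by
        push_cast; ring
      rw [h3, Complex.exp_int_mul_two_pi_mul_I, one_mul]
      congr 1
      push_cast; ring
    -- bound the exponential difference
    have hsmall : 2 * Real.pi * t ≤ 1 := by
      have h1 : t ≤ (1/8 : ℝ) := by
        refine htle.trans ?_
        have : (2:ℝ) ^ (-((K * N : ℕ) : ℤ)) ≤ (2:ℝ) ^ (-(3:ℤ)) := by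
          apply zpow_le_zpow_right₀ (by norm_num : (1:ℝ) ≤ 2)
          omega
        simpa using this.trans_eq (by norm_num)
      nlinarith [Real.pi_le_four, Real.pi_pos]
    have habs : ‖((2 * Real.pi * t : ℝ) : ℂ) * Complex.I‖ = 2 * Real.pi * t := by
      rw [norm_mul, Complex.norm_I, mul_one, Complex.norm_real, Real.norm_eq_abs, _root_.abs_of_nonneg]
      positivity
    have hexpbound : ‖Complex.exp ((2 * Real.pi * t : ℝ) * Complex.I) - 1‖ ≤ 4 * Real.pi * t := by
      have := Complex.norm_exp_sub_one_le (x := (2 * Real.pi * t : ℝ) * Complex.I)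
        (by rw [habs]; exact hsmall)
      rw [habs] at this
      calc ‖Complex.exp ((2 * Real.pi * t : ℝ) * Complex.I) - 1‖
          ≤ 2 * (2 * Real.pi * t) := this
        _ = 4 * Real.pi * t := by ring
    -- put it together
    rw [hn (k + 1)]
    rw [← hM, ← hN]
    have hnorm1 : ‖(1 / ((k:ℂ) + 1))‖ ≤ 1 := by
      have h : ((k:ℂ) + 1) = ((k+1 : ℕ) : ℂ) := by push_cast; ring
      rw [norm_div, norm_one, h, Complex.norm_natCast]
      rw [div_le_one (by positivity)]
      exact_mod_cast Nat.succ_le_succ (Nat.zero_le k)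
    have hζN : ‖ζ ^ N‖ ≤ C ^ N := by rw [norm_pow]
    have key : (2:ℝ) ^ (-((K * N : ℕ) : ℤ)) * C ^ N ≤ (1/2:ℝ) ^ (k + 1) := by
      have hCk : C ≤ 2 ^ k := le_of_lt (hK₀.trans_le (pow_le_pow_right₀ (by norm_num) hkK₀))
      have h1 : C ^ N ≤ ((2:ℝ) ^ k) ^ N := pow_le_pow_left₀ hC0 hCk N
      have h2 : (2:ℝ) ^ (-((K * N : ℕ) : ℤ)) * ((2:ℝ) ^ k) ^ N = (2:ℝ) ^ (-(N:ℤ)) := by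
        rw [← pow_mul, ← zpow_natCast (2:ℝ) (k * N), ← zpow_add₀ (by norm_num : (2:ℝ) ≠ 0)]
        congr 1
        push_cast [hK]
        ring
      have h3 : (2:ℝ) ^ (-(N:ℤ)) ≤ (1/2:ℝ) ^ (k+1) := by
        rw [zpow_neg, zpow_natCast, one_div, inv_pow]
        apply inv_anti₀ (by positivity)
        exact pow_le_pow_right₀ (by norm_num) (by omega)
      calc (2:ℝ) ^ (-((K * N : ℕ) : ℤ)) * C ^ N
          ≤ (2:ℝ) ^ (-((K * N : ℕ) : ℤ)) * ((2:ℝ) ^ k) ^ N := by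
            apply mul_le_mul_of_nonneg_left h1 (by positivity)
        _ = (2:ℝ) ^ (-(N:ℤ)) := h2
        _ ≤ (1/2:ℝ) ^ (k+1) := h3
    calc ‖(1 / ((k:ℂ) + 1)) * (Complex.exp (2 * Real.pi * Complex.I * (N : ℂ) * (α : ℂ)) - 1) * ζ ^ N‖
        = ‖(1 / ((k:ℂ) + 1))‖ * ‖Complex.exp (2 * Real.pi * Complex.I * (N : ℂ) * (α : ℂ)) - 1‖ * ‖ζ ^ N‖ := by
          rw [norm_mul, norm_mul]
      _ ≤ 1 * (4 * Real.pi * t) * C ^ N := by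
          apply mul_le_mul_of_nonneg_right _ (norm_nonneg _) |>.trans
            (mul_le_mul_of_nonneg_left hζN (by positivity))
          exact mul_le_mul hnorm1 (by rw [hexp] at *; exact hexpbound) (norm_nonneg _) (by norm_num)
      _ ≤ 4 * Real.pi * ((2:ℝ) ^ (-((K * N : ℕ) : ℤ)) * C ^ N) := by
          have := mul_le_mul_of_nonneg_right htle (pow_nonneg hC0 N)
          nlinarith [Real.pi_pos, pow_nonneg hC0 N]
      _ ≤ 4 * Real.pi * (1/2:ℝ) ^ (k + 1) := by
          have := key
          nlinarith [Real.pi_pos]
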